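/- The family of sequences (f_n) of Lebesgue measurable functions on [0,1] such that f_n → 0 in measure but (f_n(x)) fails to converge for all x in some set of positive measure is 𝔠-lineable in (L⁰[0,1])^ℕ: there is a vector space of dimension continuum of such sequences (apart from the zero sequence). -/

import Mathlib

open Filter MeasureTheory

noncomputable section StmtAux

/-- lower endpoint of the typewriter interval -/
def aT (n : ℕ) : ℝ := ((n - 2 ^ Nat.log 2 n : ℕ) : ℝ) / 2 ^ Nat.log 2 n

/-- width of the typewriter interval -/
def wT (n : ℕ) : ℝ := ((2 : ℝ) ^ Nat.log 2 n)⁻¹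

/-- typewriter sequence -/
def Tfun (n : ℕ) : ℝ → ℝ := Set.indicator (Set.Ico (aT n) (aT n + wT n)) 1

lemma Tfun_measurable (n : ℕ) : Measurable (Tfun n) :=
  measurable_const.indicator measurableSet_Ico

lemma wT_pos (n : ℕ) : 0 < wT n := by unfold wT; positivity

lemma log_pow_add {k j : ℕ} (hj : j < 2 ^ k) : Nat.log 2 (2 ^ k + j) = k :=
  Nat.log_eq_of_pow_le_of_lt_pow (Nat.le_add_right _ _)
    (by rw [pow_succ]; omega)

lemma aT_pow_add {k j : ℕ} (hj : j < 2 ^ k) :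
    aT (2 ^ k + j) = (j : ℝ) / 2 ^ k ∧ wT (2 ^ k + j) = ((2 : ℝ) ^ k)⁻¹ := by
  unfold aT wT
  rw [log_pow_add hj]
  constructor
  · congr 2
    omega
  · rfl

lemma Tfun_one {y : ℝ} (hy : y ∈ Set.Ico (0 : ℝ) 1) (k : ℕ) :
    Tfun (2 ^ k + ⌊y * 2 ^ k⌋₊) y = 1 := by
  obtain ⟨hy0, hy1⟩ := hy
  have h2k : (0 : ℝ) < 2 ^ k := by positivity
  have hj : ⌊y * 2 ^ k⌋₊ < 2 ^ k := by
    rw [Nat.floor_lt (by positivity)]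
    push_cast
    nlinarith
  obtain ⟨ha, hw⟩ := aT_pow_add hj
  unfold Tfun
  rw [ha, hw]
  rw [Set.indicator_of_mem]
  · rfl
  constructor
  · rw [div_le_iff₀ h2k]
    exact Nat.floor_le (by positivity)
  · have h2 := Nat.lt_floor_add_one (y * 2 ^ k)
    rw [show (⌊y * 2 ^ k⌋₊ : ℝ) / 2 ^ k + ((2:ℝ) ^ k)⁻¹
        = ((⌊y * 2 ^ k⌋₊ : ℝ) + 1) / 2 ^ k by field_simp]
    rw [lt_div_iff₀ h2k]
    linarith

lemma Tfun_zero_seq {y : ℝ} (hy : y ∈ Set.Ico (0 : ℝ) 1) {k : ℕ} (hk : 1 ≤ k) :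
    Tfun (2 ^ k + if ⌊y * 2 ^ k⌋₊ = 0 then 1 else 0) y = 0 := by
  obtain ⟨hy0, hy1⟩ := hy
  have h2k : (0 : ℝ) < 2 ^ k := by positivity
  have hc : ((2:ℝ) ^ k)⁻¹ * 2 ^ k = 1 := inv_mul_cancel₀ (ne_of_gt h2k)
  have h1k : 1 < 2 ^ k := by
    calc 1 < 2 ^ 1 := by norm_num
    _ ≤ 2 ^ k := Nat.pow_le_pow_right (by norm_num) hk
  by_cases h0 : ⌊y * 2 ^ k⌋₊ = 0
  · rw [if_pos h0]
    obtain ⟨ha, hw⟩ := aT_pow_add h1k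
    unfold Tfun
    rw [ha, hw]
    refine Set.indicator_of_notMem ?_ _
    rintro ⟨hl, -⟩
    have hf : y * 2 ^ k < 1 := by
      have := Nat.floor_eq_zero.1 h0
      exact_mod_cast this
    rw [div_le_iff₀ h2k] at hl
    push_cast at hl
    linarith
  · rw [if_neg h0]
    obtain ⟨ha, hw⟩ := aT_pow_add (by positivity : 0 < 2 ^ k)
    unfold Tfun
    rw [ha, hw]
    refine Set.indicator_of_notMem ?_ _
    rintro ⟨-, hr⟩
    have h1 : (1 : ℝ) ≤ y * 2 ^ k := by
      have h1' : 1 ≤ ⌊y * 2 ^ k⌋₊ := Nat.one_le_iff_ne_zero.2 h0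
      calc (1:ℝ) ≤ (⌊y * 2 ^ k⌋₊ : ℝ) := by exact_mod_cast h1'
      _ ≤ y * 2 ^ k := Nat.floor_le (by positivity)
    rw [Nat.cast_zero, zero_div, zero_add] at hr
    have hr' : y * 2 ^ k < 1 := by
      calc y * 2 ^ k < ((2:ℝ) ^ k)⁻¹ * 2 ^ k := by nlinarith
      _ = 1 := hc
    linarith

lemma Tfun_zero_of_one_le {y : ℝ} (hy : 1 ≤ y) (n : ℕ) : Tfun n y = 0 := by
  unfold Tfun
  refine Set.indicator_of_notMem ?_ _
  rintro ⟨-, hr⟩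
  have hk : n < 2 ^ (Nat.log 2 n + 1) := Nat.lt_pow_succ_log_self (by norm_num) n
  have hsub : (n - 2 ^ Nat.log 2 n : ℕ) < 2 ^ Nat.log 2 n := by
    rw [pow_succ] at hk; omega
  have h2k : (0 : ℝ) < 2 ^ Nat.log 2 n := by positivity
  have hcan : ((2:ℝ) ^ Nat.log 2 n)⁻¹ * 2 ^ Nat.log 2 n = 1 := inv_mul_cancel₀ (ne_of_gt h2k)
  have hle : aT n + wT n ≤ 1 := by
    unfold aT wT
    have h1 : ((n - 2 ^ Nat.log 2 n : ℕ) : ℝ) + 1 ≤ 2 ^ Nat.log 2 n := by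
      exact_mod_cast Nat.succ_le_of_lt hsub
    rw [div_add' _ _ _ (ne_of_gt h2k), div_le_one h2k]
    nlinarith
  linarith

lemma Tfun_zero_apply (y : ℝ) : Tfun 0 y = if 0 ≤ y ∧ y < 1 then 1 else 0 := by
  unfold Tfun aT wT
  norm_num [Set.indicator_apply, Set.mem_Ico]

/-- the typewriter sequence diverges pointwise -/
lemma no_limit {c : ℝ} (hc : c ≠ 0) {y : ℝ} (hy : y ∈ Set.Ico (0 : ℝ) 1) :
    ¬ ∃ l : ℝ, Tendsto (fun n : ℕ => c * Tfun n y) atTop (nhds l) := by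
  rintro ⟨l, hl⟩
  have hφ1 : Tendsto (fun k : ℕ => 2 ^ k + ⌊y * 2 ^ k⌋₊) atTop atTop :=
    tendsto_atTop_mono (fun k => le_trans (Nat.lt_two_pow_self (n := k)).le (Nat.le_add_right _ _))
      tendsto_id
  have hφ0 : Tendsto (fun k : ℕ => 2 ^ k + if ⌊y * 2 ^ k⌋₊ = 0 then 1 else 0) atTop atTop :=
    tendsto_atTop_mono (fun k => le_trans (Nat.lt_two_pow_self (n := k)).le (Nat.le_add_right _ _))
      tendsto_id
  have h1 : Tendsto (fun k : ℕ => c * Tfun (2 ^ k + ⌊y * 2 ^ k⌋₊) y) atTop (nhds l) :=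
    hl.comp hφ1
  have h0 : Tendsto (fun k : ℕ => c * Tfun (2 ^ k + if ⌊y * 2 ^ k⌋₊ = 0 then 1 else 0) y)
      atTop (nhds l) := hl.comp hφ0
  have e1 : l = c := by
    refine tendsto_nhds_unique h1 ?_
    have : (fun k : ℕ => c * Tfun (2 ^ k + ⌊y * 2 ^ k⌋₊) y) = fun _ => c := by
      funext k; rw [Tfun_one hy k, mul_one]
    rw [this]; exact tendsto_const_nhds
  have e0 : l = 0 := by
    refine tendsto_nhds_unique h0 ?_
    have hconst : Tendsto (fun _ : ℕ => (0:ℝ)) atTop (nhds 0) := tendsto_const_nhds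
    refine hconst.congr' ?_
    filter_upwards [eventually_ge_atTop 1] with k hk
    rw [Tfun_zero_seq hy hk, mul_zero]
  exact hc (by rw [← e1, e0])

lemma tendsto_wT : Tendsto (fun n : ℕ => ENNReal.ofReal (wT n)) atTop (nhds 0) := by
  have hlog : Tendsto (Nat.log 2) atTop atTop := by
    refine tendsto_atTop_atTop.2 fun K => ⟨2 ^ K, fun n hn => ?_⟩
    have hn0 : n ≠ 0 := ((pow_pos (by norm_num : (0:ℕ) < 2) K).trans_le hn).ne'
    exact (Nat.le_log_iff_pow_le (by norm_num) hn0).2 hn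
  have hreal : Tendsto (fun k : ℕ => ((2 : ℝ) ^ k)⁻¹) atTop (nhds 0) := by
    simp_rw [← inv_pow]
    exact tendsto_pow_atTop_nhds_zero_of_lt_one (by norm_num) (by norm_num)
  have := (ENNReal.tendsto_ofReal (hreal.comp hlog))
  simpa [wT, Function.comp] using this

/-- the shifted typewriter sequences -/
def vfun (t : ↑(Set.Ioo (0:ℝ) 2⁻¹)) : ℕ → ℝ → ℝ := fun n x => Tfun n (2 * (x - (t:ℝ)))

lemma indep_aux (s : Finset ↑(Set.Ioo (0:ℝ) 2⁻¹)) :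
    ∀ g : ↑(Set.Ioo (0:ℝ) 2⁻¹) → ℝ, ∑ i ∈ s, g i • vfun i = 0 → ∀ i ∈ s, g i = 0 := by
  induction s using Finset.strongInduction with
  | _ s ih =>
    intro g hg i hi
    have hs : s.Nonempty := ⟨i, hi⟩
    obtain ⟨j, hj, hjmax⟩ := s.exists_max_image (fun i => (i : ℝ)) hs
    set b := s.sup' hs (fun i => if i = j then (i:ℝ) else (i:ℝ) + 2⁻¹) with hbdef
    have hbj : (j:ℝ) ≤ b := by
      have h := Finset.le_sup' (f := fun i => if i = j then (i:ℝ) else (i:ℝ) + 2⁻¹) hj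
      rwa [if_pos rfl] at h
    have hblt : b < (j:ℝ) + 2⁻¹ := by
      rw [hbdef, Finset.sup'_lt_iff]
      intro i' hi'
      by_cases h : i' = j
      · rw [if_pos h, h]; norm_num
      · rw [if_neg h]
        have hlt : (i':ℝ) < j :=
          lt_of_le_of_ne (hjmax i' hi') (fun he => h (Subtype.coe_injective he))
        linarith
    set x := (b + ((j:ℝ) + 2⁻¹)) / 2 with hxdef
    have hx1 : b < x := by rw [hxdef]; linarith
    have hx2 : x < (j:ℝ) + 2⁻¹ := by rw [hxdef]; linarith
    have hval := congrFun (congrFun hg 0) x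
    simp only [Finset.sum_apply, Pi.smul_apply, smul_eq_mul, Pi.zero_apply] at hval
    have hgj : g j = 0 := by
      rw [Finset.sum_eq_single_of_mem j hj] at hval
      · have h1 : vfun j 0 x = 1 := by
          unfold vfun
          rw [Tfun_zero_apply, if_pos ⟨by linarith, by linarith⟩]
        rwa [h1, mul_one] at hval
      · intro i' hi' hne
        have hge : (i':ℝ) + 2⁻¹ ≤ b := by
          have h := Finset.le_sup' (f := fun i => if i = j then (i:ℝ) else (i:ℝ) + 2⁻¹) hi'
          rwa [if_neg hne] at h
        have h0 : vfun i' 0 x = 0 := by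
          unfold vfun
          rw [Tfun_zero_apply, if_neg]
          rintro ⟨-, h2⟩
          linarith
        rw [h0, mul_zero]
    by_cases hij : i = j
    · rw [hij]; exact hgj
    · refine ih (s.erase j) (Finset.erase_ssubset hj) g ?_ i (Finset.mem_erase.2 ⟨hij, hi⟩)
      have h3 := Finset.sum_erase_add s (fun i => g i • vfun i) hj
      rw [hg] at h3
      simp only [hgj, zero_smul, add_zero] at h3
      exact h3

end StmtAux


theorem stmt_19 :
    ∃ M : Submodule ℝ (ℕ → ℝ → ℝ), Module.rank ℝ M = Cardinal.continuum ∧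
      ∀ F ∈ M,
        (∀ n : ℕ, Measurable (F n)) ∧
        (∀ α : ℝ, 0 < α →
          Tendsto (fun n : ℕ => volume {x : ℝ | x ∈ Set.Icc (0 : ℝ) 1 ∧ α < |F n x|})
            atTop (nhds 0)) ∧
        (F ≠ 0 → ∃ S : Set ℝ, S ⊆ Set.Icc (0 : ℝ) 1 ∧ 0 < volume S ∧
          ∀ x ∈ S, ¬ ∃ l : ℝ, Tendsto (fun n : ℕ => F n x) atTop (nhds l)) := by
  classical
  have hind : LinearIndependent ℝ vfun :=
    linearIndependent_iff'.2 fun s g h i hi => indep_aux s g h i hi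
  refine ⟨Submodule.span ℝ (Set.range vfun), ?_, ?_⟩
  · rw [rank_span hind, Cardinal.mk_range_eq _ hind.injective]
    exact Cardinal.mk_Ioo_real (by norm_num)
  · intro F hF
    obtain ⟨c, hc⟩ := Finsupp.mem_span_range_iff_exists_finsupp.1 hF
    have hFeq : ∀ n x, F n x = ∑ i ∈ c.support, c i * Tfun n (2 * (x - (i:ℝ))) := by
      intro n x
      rw [← hc, Finsupp.sum]
      simp [Finset.sum_apply, vfun]
    refine ⟨?_, ?_, ?_⟩
    · intro n
      have hFn : F n = fun x => ∑ i ∈ c.support, c i * Tfun n (2 * (x - (i:ℝ))) :=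
        funext (hFeq n)
      rw [hFn]
      exact Finset.measurable_sum _ fun i _ =>
        (((Tfun_measurable n).comp ((measurable_id.sub_const _).const_mul 2)).const_mul (c i))
    · intro α hα
      have hsub : ∀ n, {x : ℝ | x ∈ Set.Icc (0:ℝ) 1 ∧ α < |F n x|} ⊆
          ⋃ i ∈ c.support, Set.Ico ((i:ℝ) + aT n / 2) ((i:ℝ) + aT n / 2 + wT n / 2) := by
        intro n x hx
        obtain ⟨hx1, hx2⟩ := hx
        by_contra hnot
        simp only [Set.mem_iUnion, not_exists] at hnot
        have hF0 : F n x = 0 := by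
          rw [hFeq]
          refine Finset.sum_eq_zero fun i hi => ?_
          have hT : Tfun n (2 * (x - (i:ℝ))) = 0 := by
            unfold Tfun
            refine Set.indicator_of_notMem ?_ _
            rintro ⟨hl, hr⟩
            exact hnot i hi (Set.mem_Ico.2 ⟨by linarith, by linarith⟩)
          rw [hT, mul_zero]
        rw [hF0, abs_zero] at hx2
        linarith
      have hbound : ∀ n, volume {x : ℝ | x ∈ Set.Icc (0:ℝ) 1 ∧ α < |F n x|} ≤
          (c.support.card : ENNReal) * ENNReal.ofReal (wT n) := by
        intro n
        refine le_trans (measure_mono (hsub n)) ?_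
        refine le_trans (measure_biUnion_finset_le _ _) ?_
        have hone : ∀ i ∈ c.support,
            volume (Set.Ico ((i:ℝ) + aT n / 2) ((i:ℝ) + aT n / 2 + wT n / 2)) ≤
              ENNReal.ofReal (wT n) := by
          intro i _
          rw [Real.volume_Ico, show (i:ℝ) + aT n / 2 + wT n / 2 - ((i:ℝ) + aT n / 2)
              = wT n / 2 by ring]
          exact ENNReal.ofReal_le_ofReal (by linarith [wT_pos n])
        calc ∑ i ∈ c.support,
            volume (Set.Ico ((i:ℝ) + aT n / 2) ((i:ℝ) + aT n / 2 + wT n / 2))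
            ≤ c.support.card • ENNReal.ofReal (wT n) := Finset.sum_le_card_nsmul _ _ _ hone
          _ = (c.support.card : ENNReal) * ENNReal.ofReal (wT n) := nsmul_eq_mul _ _
      have hlim : Tendsto (fun n : ℕ => (c.support.card : ENNReal) * ENNReal.ofReal (wT n))
          atTop (nhds 0) := by
        have h := ENNReal.Tendsto.const_mul (a := (c.support.card : ENNReal)) tendsto_wT
          (Or.inr (ENNReal.natCast_ne_top _))
        simpa using h
      exact tendsto_of_tendsto_of_tendsto_of_le_of_le tendsto_const_nhds hlim
        (fun n => zero_le) hbound
    · intro hF0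
      have hcne : c ≠ 0 := by
        rintro rfl
        exact hF0 (by rw [← hc]; simp)
      have hsne : c.support.Nonempty := Finsupp.support_nonempty_iff.2 hcne
      obtain ⟨j, hj, hjmax⟩ := c.support.exists_max_image (fun i => (i : ℝ)) hsne
      set b := c.support.sup' hsne (fun i => if i = j then (i:ℝ) else (i:ℝ) + 2⁻¹) with hbdef
      have hbj : (j:ℝ) ≤ b := by
        have h := Finset.le_sup' (f := fun i => if i = j then (i:ℝ) else (i:ℝ) + 2⁻¹) hj
        rwa [if_pos rfl] at h
      have hblt : b < (j:ℝ) + 2⁻¹ := by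
        rw [hbdef, Finset.sup'_lt_iff]
        intro i' hi'
        by_cases h : i' = j
        · rw [if_pos h, h]; norm_num
        · rw [if_neg h]
          have hlt : (i':ℝ) < j :=
            lt_of_le_of_ne (hjmax i' hi') (fun he => h (Subtype.coe_injective he))
          linarith
      have hj0 : (0:ℝ) < (j:ℝ) := j.2.1
      have hj2 : (j:ℝ) < 2⁻¹ := j.2.2
      refine ⟨Set.Ioo b ((j:ℝ) + 2⁻¹), ?_, ?_, ?_⟩
      · rintro x ⟨hx1, hx2⟩
        exact ⟨by linarith, by linarith⟩
      · rw [Real.volume_Ioo]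
        exact ENNReal.ofReal_pos.2 (by linarith)
      · rintro x ⟨hx1, hx2⟩
        have heq : (fun n : ℕ => F n x) = fun n => c j * Tfun n (2 * (x - (j:ℝ))) := by
          funext n
          rw [hFeq]
          refine Finset.sum_eq_single_of_mem j hj fun i' hi' hne => ?_
          have hge : (i':ℝ) + 2⁻¹ ≤ b := by
            have h := Finset.le_sup' (f := fun i => if i = j then (i:ℝ) else (i:ℝ) + 2⁻¹) hi'
            rwa [if_neg hne] at h
          rw [Tfun_zero_of_one_le (by linarith) n, mul_zero]
        rw [heq]
        exact no_limit (Finsupp.mem_support_iff.1 hj) ⟨by linarith, by linarith⟩
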